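/- Let m ≥ 2 and consider the symplectic SDP design of order m in Block's description. Then for any four distinct points a, b, c, d ∈ X_m, the cardinality |B_a ∩ B_b ∩ B_c ∩ B_d| is divisible by 2^(m−2) (for m = 2 this is the trivial divisor 1). -/

import Mathlib

open Finset

namespace SympAux

def E (u v : Fin 4) : ℤ := if u = v then -1 else 1

def sgn (u w z : Fin 4) : ℤ := if u = w ∨ u = z ∨ w = z then 1 else -1

lemma l1 : ∀ u : Fin 4, ∑ v, E u v = 2 := by decide
lemma l2 : ∀ u w : Fin 4, u ≠ w → ∑ v, E u v * E w v = 0 := by decide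
lemma l3 : ∀ u w z : Fin 4, ∑ v, E u v * E w v * E z v = 2 * sgn u w z := by decide
lemma l4 : ∀ u w y z : Fin 4, (4:ℤ) ∣ ∑ v, E u v * E w v * E y v * E z v := by decide
lemma lsgn : ∀ u w y z : Fin 4, sgn u w y * sgn u w z * sgn u y z * sgn w y z = 1 := by decide
lemma sgn_sq : ∀ u w z : Fin 4, sgn u w z * sgn u w z = 1 := by decide

def chi {m : ℕ} (a x : Fin m → Fin 4) : ℤ := ∏ i, E (a i) (x i)

lemma chi_eq {m : ℕ} (a x : Fin m → Fin 4) :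
    chi a x = (-1 : ℤ) ^ (univ.filter fun i => a i = x i).card := by
  unfold chi E
  rw [← Finset.prod_filter, Finset.prod_const]

lemma sum_pi_prod {m : ℕ} (f : Fin m → Fin 4 → ℤ) :
    ∑ x : Fin m → Fin 4, ∏ i, f i (x i) = ∏ i, ∑ v, f i v :=
  (Fintype.prod_sum f).symm

lemma sum_one {m : ℕ} : ∑ _x : Fin m → Fin 4, (1:ℤ) = 2^(2*m) := by
  simp [Finset.card_univ, pow_mul]

lemma sum_chi {m : ℕ} (a : Fin m → Fin 4) : ∑ x, chi a x = 2^m := by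
  unfold chi
  rw [sum_pi_prod]
  simp [l1]

lemma sum_chi_pair {m : ℕ} {a b : Fin m → Fin 4} (h : a ≠ b) :
    ∑ x, chi a x * chi b x = 0 := by
  have : ∀ x, chi a x * chi b x = ∏ i, (E (a i) (x i) * E (b i) (x i)) := by
    intro x; exact Finset.prod_mul_distrib.symm
  rw [Finset.sum_congr rfl fun x _ => this x,
    sum_pi_prod (fun i v => E (a i) v * E (b i) v)]
  obtain ⟨i, hi⟩ := Function.ne_iff.mp h
  exact Finset.prod_eq_zero (mem_univ i) (l2 _ _ hi)

def eps {m : ℕ} (a b c : Fin m → Fin 4) : ℤ := ∏ i, sgn (a i) (b i) (c i)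

lemma sum_chi_triple {m : ℕ} (a b c : Fin m → Fin 4) :
    ∑ x, chi a x * chi b x * chi c x = 2^m * eps a b c := by
  have : ∀ x, chi a x * chi b x * chi c x
      = ∏ i, (E (a i) (x i) * E (b i) (x i) * E (c i) (x i)) := by
    intro x; unfold chi; rw [Finset.prod_mul_distrib, Finset.prod_mul_distrib]
  rw [Finset.sum_congr rfl fun x _ => this x,
    sum_pi_prod (fun i v => E (a i) v * E (b i) v * E (c i) v),
    Finset.prod_congr rfl fun i _ => l3 (a i) (b i) (c i), Finset.prod_mul_distrib]
  simp [eps]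

lemma sum_chi_quad {m : ℕ} (a b c d : Fin m → Fin 4) :
    (2:ℤ)^(2*m) ∣ ∑ x, chi a x * chi b x * chi c x * chi d x := by
  have : ∀ x, chi a x * chi b x * chi c x * chi d x
      = ∏ i, (E (a i) (x i) * E (b i) (x i) * E (c i) (x i) * E (d i) (x i)) := by
    intro x; unfold chi
    rw [Finset.prod_mul_distrib, Finset.prod_mul_distrib, Finset.prod_mul_distrib]
  rw [Finset.sum_congr rfl fun x _ => this x,
    sum_pi_prod (fun i v => E (a i) v * E (b i) v * E (c i) v * E (d i) v)]
  have h4 : (2:ℤ)^(2*m) = ∏ _i : Fin m, (4:ℤ) := by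
    simp [pow_mul]
  rw [h4]
  exact Finset.prod_dvd_prod_of_dvd _ _ fun i _ => l4 (a i) (b i) (c i) (d i)

lemma eps_unit {m : ℕ} (a b c : Fin m → Fin 4) : eps a b c = 1 ∨ eps a b c = -1 := by
  have h : eps a b c * eps a b c = 1 := by
    unfold eps
    rw [← Finset.prod_mul_distrib]
    exact Finset.prod_eq_one fun i _ => sgn_sq _ _ _
  exact Int.isUnit_iff.mp (IsUnit.of_mul_eq_one _ h)

lemma eps_prod {m : ℕ} (a b c d : Fin m → Fin 4) :
    eps a b c * eps a b d * eps a c d * eps b c d = 1 := by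
  unfold eps
  rw [← Finset.prod_mul_distrib, ← Finset.prod_mul_distrib, ← Finset.prod_mul_distrib]
  exact Finset.prod_eq_one fun i _ => lsgn _ _ _ _

lemma eps_sum_dvd {m : ℕ} (a b c d : Fin m → Fin 4) :
    (4:ℤ) ∣ eps a b c + eps a b d + eps a c d + eps b c d := by
  have h := eps_prod a b c d
  rcases eps_unit a b c with h1 | h1 <;> rcases eps_unit a b d with h2 | h2 <;>
    rcases eps_unit a c d with h3 | h3 <;> rcases eps_unit b c d with h4 | h4 <;>
    rw [h1, h2, h3, h4] at h ⊢ <;> revert h <;> norm_num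

end SympAux

/-- Block's description: the block of the symplectic SDP design attached to the point
`a : Fin m → Fin 4` consists of those `x` agreeing with `a` in an odd number of coordinates. -/
def symplecticBlock (m : ℕ) (a : Fin m → Fin 4) : Finset (Fin m → Fin 4) :=
  Finset.univ.filter fun x => Odd (Finset.univ.filter (fun i => a i = x i)).card

/-- The block family of the symplectic SDP design of order `m` in Block's description. -/
def symplecticBlocks (m : ℕ) : Finset (Finset (Fin m → Fin 4)) :=
  Finset.univ.image (symplecticBlock m)

set_option maxHeartbeats 1000000 in
theorem symplectic_quadruple_divisible {m : ℕ} (hm : 2 ≤ m) :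
    ∀ a b c d : Fin m → Fin 4, a ≠ b → a ≠ c → a ≠ d → b ≠ c → b ≠ d → c ≠ d →
      2^(m-2) ∣ (symplecticBlock m a ∩ symplecticBlock m b ∩
                  symplecticBlock m c ∩ symplecticBlock m d).card := by
  obtain ⟨k, rfl⟩ : ∃ k, m = k + 2 := ⟨m - 2, by omega⟩
  intro a b c d hab hac had hbc hbd hcd
  open SympAux in
  set S := symplecticBlock (k+2) a ∩ symplecticBlock (k+2) b ∩ symplecticBlock (k+2) c ∩
      symplecticBlock (k+2) d with hS
  have key : ∀ (t x : Fin (k+2) → Fin 4),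
      (1:ℤ) - chi t x = if x ∈ symplecticBlock (k+2) t then 2 else 0 := by
    intro t x
    rw [chi_eq]
    by_cases h : Odd (univ.filter fun i => t i = x i).card
    · have hx : x ∈ symplecticBlock (k+2) t := by simp [symplecticBlock, h]
      rw [if_pos hx, h.neg_one_pow]; norm_num
    · have hx : x ∉ symplecticBlock (k+2) t := by simpa [symplecticBlock] using h
      rw [if_neg hx, (Nat.not_odd_iff_even.mp h).neg_one_pow]; norm_num
  have hA : ∑ x : Fin (k+2) → Fin 4,
      (1 - chi a x) * (1 - chi b x) * (1 - chi c x) * (1 - chi d x)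
      = 16 * (S.card : ℤ) := by
    have hpt : ∀ x : Fin (k+2) → Fin 4,
        (1 - chi a x) * (1 - chi b x) * (1 - chi c x) * (1 - chi d x)
        = if x ∈ S then (16:ℤ) else 0 := by
      intro x
      rw [key a x, key b x, key c x, key d x]
      by_cases h1 : x ∈ symplecticBlock (k+2) a <;>
        by_cases h2 : x ∈ symplecticBlock (k+2) b <;>
        by_cases h3 : x ∈ symplecticBlock (k+2) c <;>
        by_cases h4 : x ∈ symplecticBlock (k+2) d <;>
        simp [hS, Finset.mem_inter, h1, h2, h3, h4]
    rw [Finset.sum_congr rfl fun x _ => hpt x, Finset.sum_ite_mem,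
      Finset.univ_inter, Finset.sum_const, nsmul_eq_mul]
    ring
  have hpt2 : ∀ x : Fin (k+2) → Fin 4,
      (1 - chi a x) * (1 - chi b x) * (1 - chi c x) * (1 - chi d x)
      = (((((((((((((( (1:ℤ) - chi a x) - chi b x) - chi c x) - chi d x)
          + chi a x * chi b x) + chi a x * chi c x) + chi a x * chi d x)
          + chi b x * chi c x) + chi b x * chi d x) + chi c x * chi d x)
          - chi a x * chi b x * chi c x) - chi a x * chi b x * chi d x)
          - chi a x * chi c x * chi d x) - chi b x * chi c x * chi d x)
          + chi a x * chi b x * chi c x * chi d x := by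
    intro x; ring
  have hBig : (16:ℤ) * S.card = 2^(2*(k+2)) - 4 * 2^(k+2)
      - 2^(k+2) * (eps a b c + eps a b d + eps a c d + eps b c d)
      + ∑ x, chi a x * chi b x * chi c x * chi d x := by
    rw [← hA, Finset.sum_congr rfl fun x _ => hpt2 x]
    simp only [Finset.sum_add_distrib, Finset.sum_sub_distrib]
    rw [sum_one, sum_chi a, sum_chi b, sum_chi c, sum_chi d,
      sum_chi_pair hab, sum_chi_pair hac, sum_chi_pair had,
      sum_chi_pair hbc, sum_chi_pair hbd, sum_chi_pair hcd,
      sum_chi_triple a b c, sum_chi_triple a b d, sum_chi_triple a c d,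
      sum_chi_triple b c d]
    ring
  obtain ⟨q, hq⟩ := sum_chi_quad a b c d
  obtain ⟨e, he⟩ := eps_sum_dvd a b c d
  have hN : (S.card : ℤ) = 2^k * (2^k - 1 - e + 2^k * q) := by
    have h16 : (16:ℤ) * S.card = 16 * (2^k * (2^k - 1 - e + 2^k * q)) := by
      rw [hBig, hq, he]
      ring
    exact mul_left_cancel₀ (by norm_num : (16:ℤ) ≠ 0) h16
  have hdvd : (2:ℤ)^k ∣ (S.card : ℤ) := ⟨_, hN⟩
  have h2 : ((2^k : ℕ) : ℤ) ∣ (S.card : ℤ) := by exact_mod_cast hdvd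
  have h3 : 2^k ∣ S.card := Int.ofNat_dvd.mp (by exact_mod_cast h2)
  simpa only [Nat.add_sub_cancel] using h3
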